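/- Unbiasedness for ridge regression: if S ~ DPP_L((1/λ) X X^T), i.e., Pr{S} ∝ λ^{-|S|} det((X X^T)_{S,S}), then E[X_S^† y_S] = argmin_w ||Xw − y||^2 + λ||w||^2 = (X^T X + λI)^{-1} X^T y. -/

import Mathlib

open Matrix

/-- Rank-one update formula for the determinant:
`det(A + u vᵀ) = det A + vᵀ (adj A) u`. -/
lemma det_add_outer {m : Type*} [DecidableEq m] [Fintype m] (A : Matrix m m ℝ) (u v : m → ℝ) :
    (A + Matrix.of (fun i j => u i * v j)).det = A.det + v ⬝ᵥ (A.adjugate *ᵥ u) := by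
  have hexp := (Matrix.detRowAlternating (R := ℝ) (n := m)).toMultilinearMap.map_add_univ
      (fun i => u i • v) (fun p q => A p q)
  have e1 : (A + Matrix.of fun i j => u i * v j) = Matrix.of (fun i => u i • v + A i) := by
    ext i j
    simp [add_comm]
  have e2 : Matrix.detRowAlternating ((fun i => u i • v) + (fun p q => A p q))
      = (Matrix.of (fun i => u i • v + A i)).det := rfl
  have hterm : ∀ S : Finset m,
      Matrix.detRowAlternating (S.piecewise (fun i => u i • v) (fun p q => A p q))
        = (if S = ∅ then A.det else 0)
          + ∑ i, (if S = {i} then u i * (A.updateRow i v).det else 0) := by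
    intro S
    have hne' : ∀ x : m, ¬((∅ : Finset m) = {x}) := fun x h =>
      (Finset.singleton_ne_empty x) h.symm
    rcases Nat.lt_or_ge S.card 2 with hc | hc
    · interval_cases h : S.card
      · have hS : S = ∅ := Finset.card_eq_zero.mp h
        subst hS
        rw [Finset.piecewise_empty]
        show A.det = _
        simp [hne']
      · obtain ⟨i, rfl⟩ := Finset.card_eq_one.mp h
        have h1 : ({i} : Finset m).piecewise (fun i => u i • v) (fun p q => A p q)
            = A.updateRow i (u i • v) := by
          rw [Finset.piecewise_singleton]; rfl
        have h2 : (Finset.univ : Finset m).sum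
            (fun j => if ({i} : Finset m) = {j} then u j * (A.updateRow j v).det else 0)
            = u i * (A.updateRow i v).det := by
          rw [Finset.sum_eq_single i]
          · simp
          · intro b _ hb
            simp [Finset.singleton_injective.eq_iff, hb.symm]
          · simp
        rw [h1, h2]
        have h3 : Matrix.detRowAlternating (A.updateRow i (u i • v))
            = (A.updateRow i (u i • v)).det := rfl
        rw [h3, Matrix.det_updateRow_smul]
        simp [Finset.singleton_ne_empty]
    · obtain ⟨i, hi, j, hj, hij⟩ := Finset.one_lt_card.mp hc
      set Q : Matrix m m ℝ := Matrix.of (S.piecewise (fun _ => v) (fun p q => A p q)) with hQdef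
      have hPQ : S.piecewise (fun i => u i • v) (fun p q => A p q)
          = Matrix.of (fun p q => (if p ∈ S then u p else 1) * Q p q) := by
        funext p q
        by_cases hp : p ∈ S
        · simp [Finset.piecewise, hp, hQdef]
        · simp [Finset.piecewise, hp, hQdef]
      have hQ : Q.det = 0 := by
        apply Matrix.det_zero_of_row_eq hij
        have hfix : ∀ k, k ∈ S → Q k = v := fun k hk =>
          funext fun q => by
            show S.piecewise (fun _ => v) (fun p q => A p q) k q = v q
            rw [Finset.piecewise_eq_of_mem _ _ _ hk]
        rw [hfix i hi, hfix j hj]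
      have h4 : Matrix.detRowAlternating (S.piecewise (fun i => u i • v) (fun p q => A p q))
          = (Matrix.of (fun p q => (if p ∈ S then u p else 1) * Q p q) : Matrix m m ℝ).det := by
        rw [← hPQ]; rfl
      rw [h4, Matrix.det_mul_column, hQ, mul_zero]
      have hne : S ≠ ∅ := by
        intro h; rw [h] at hi; exact absurd hi (Finset.notMem_empty i)
      have hns : ∀ k, ¬ (S = {k}) := by
        intro k h; rw [h] at hc; simp at hc
      simp [hne, hns]
  have hsum : ∑ S : Finset m, Matrix.detRowAlternating
      (S.piecewise (fun i => u i • v) (fun p q => A p q))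
      = A.det + ∑ i, u i * (A.updateRow i v).det := by
    rw [Finset.sum_congr rfl (fun S _ => hterm S), Finset.sum_add_distrib]
    congr 1
    · simp
    · rw [Finset.sum_comm]
      apply Finset.sum_congr rfl
      intro i _
      simp
  have hcr : ∀ i, (A.updateRow i v).det = Aᵀ.cramer v i := by
    intro i
    rw [Matrix.cramer_apply, Matrix.updateCol_transpose, Matrix.det_transpose]
  have hfinal : ∑ i, u i * (A.updateRow i v).det = v ⬝ᵥ (A.adjugate *ᵥ u) := by
    simp only [hcr, Matrix.cramer_eq_adjugate_mulVec, ← Matrix.adjugate_transpose]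
    rw [show ∀ w : m → ℝ, ∑ i, u i * w i = u ⬝ᵥ w from fun w => rfl]
    rw [Matrix.dotProduct_mulVec, Matrix.vecMul_transpose, dotProduct_comm]
  calc (A + Matrix.of fun i j => u i * v j).det
      = Matrix.detRowAlternating ((fun i => u i • v) + (fun p q => A p q)) := by rw [e1, e2]
    _ = ∑ S : Finset m, Matrix.detRowAlternating
          (S.piecewise (fun i => u i • v) (fun p q => A p q)) := hexp
    _ = A.det + ∑ i, u i * (A.updateRow i v).det := hsum
    _ = A.det + v ⬝ᵥ (A.adjugate *ᵥ u) := by rw [hfinal]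

/-- The principal submatrix determinant `det(M_{S,S})`. -/
noncomputable def subdet {n : ℕ} (M : Matrix (Fin n) (Fin n) ℝ) (S : Finset (Fin n)) : ℝ :=
  (M.submatrix (fun i : {x // x ∈ S} => (i : Fin n)) (fun j : {x // x ∈ S} => (j : Fin n))).det

/-- The row submatrix `X_S` of `X` (rows indexed by the subset `S`). -/
noncomputable def rowsOf {n d : ℕ} (X : Matrix (Fin n) (Fin d) ℝ) (S : Finset (Fin n)) :
    Matrix {x // x ∈ S} (Fin d) ℝ :=
  X.submatrix (fun i : {x // x ∈ S} => (i : Fin n)) id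

lemma det_piecewise_eq_subdet {n : ℕ} (M : Matrix (Fin n) (Fin n) ℝ) (S : Finset (Fin n)) :
    (Matrix.of (S.piecewise (fun p q => M p q)
      (fun p q => (1 : Matrix (Fin n) (Fin n) ℝ) p q)) : Matrix (Fin n) (Fin n) ℝ).det
      = subdet M S := by
  set Q : Matrix (Fin n) (Fin n) ℝ := Matrix.of (S.piecewise (fun p q => M p q)
      (fun p q => (1 : Matrix (Fin n) (Fin n) ℝ) p q)) with hQdef
  set e := Equiv.sumCompl (fun x : Fin n => x ∈ S) with he
  rw [← Matrix.det_submatrix_equiv_self e Q]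
  have hblocks : Q.submatrix e e = Matrix.fromBlocks
      (M.submatrix (fun i : {x // x ∈ S} => (i : Fin n)) (fun j : {x // x ∈ S} => (j : Fin n)))
      (M.submatrix (fun i : {x // x ∈ S} => (i : Fin n)) (fun j : {x // ¬ x ∈ S} => (j : Fin n)))
      0 (1 : Matrix {x // ¬ x ∈ S} {x // ¬ x ∈ S} ℝ) := by
    ext i j
    cases i with
    | inl i =>
      cases j with
      | inl j =>
        simp [hQdef, he, Finset.piecewise_eq_of_mem _ _ _ i.2]
      | inr j =>
        simp [hQdef, he, Finset.piecewise_eq_of_mem _ _ _ i.2]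
    | inr i =>
      cases j with
      | inl j =>
        have hne : (i : Fin n) ≠ (j : Fin n) := by
          intro h
          exact i.2 (h ▸ j.2)
        simp [hQdef, he, Finset.piecewise_eq_of_notMem _ _ _ i.2, Matrix.one_apply, hne]
      | inr j =>
        simp [hQdef, he, Finset.piecewise_eq_of_notMem _ _ _ i.2, Matrix.one_apply,
          Subtype.ext_iff]
  rw [hblocks, Matrix.det_fromBlocks_zero₂₁, Matrix.det_one, mul_one, subdet]

/-- Expansion of `det(1 + zM)` into principal minors. -/
lemma det_one_add_smul_eq_sum_subdet {n : ℕ} (M : Matrix (Fin n) (Fin n) ℝ) (z : ℝ) :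
    ((1 : Matrix (Fin n) (Fin n) ℝ) + z • M).det
      = ∑ S : Finset (Fin n), z ^ S.card * subdet M S := by
  have hexp := (Matrix.detRowAlternating (R := ℝ) (n := Fin n)).toMultilinearMap.map_add_univ
      (fun i => z • (fun q => M i q)) (fun p q => (1 : Matrix (Fin n) (Fin n) ℝ) p q)
  have e1 : ((1 : Matrix (Fin n) (Fin n) ℝ) + z • M)
      = Matrix.of (fun i => z • (fun q => M i q)
          + fun q => (1 : Matrix (Fin n) (Fin n) ℝ) i q) := by
    ext i j
    simp [add_comm]
  have e2 : Matrix.detRowAlternating ((fun i => z • (fun q => M i q))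
        + fun p q => (1 : Matrix (Fin n) (Fin n) ℝ) p q)
      = (Matrix.of (fun i => z • (fun q => M i q)
        + fun q => (1 : Matrix (Fin n) (Fin n) ℝ) i q) : Matrix (Fin n) (Fin n) ℝ).det := rfl
  have hterm : ∀ S : Finset (Fin n),
      Matrix.detRowAlternating (S.piecewise (fun i => z • (fun q => M i q))
        (fun p q => (1 : Matrix (Fin n) (Fin n) ℝ) p q))
      = z ^ S.card * subdet M S := by
    intro S
    have hPQ : S.piecewise (fun i => z • (fun q => M i q))
        (fun p q => (1 : Matrix (Fin n) (Fin n) ℝ) p q)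
        = Matrix.of (fun p q => (if p ∈ S then z else 1) *
            (Matrix.of (S.piecewise (fun p q => M p q)
              (fun p q => (1 : Matrix (Fin n) (Fin n) ℝ) p q))
                : Matrix (Fin n) (Fin n) ℝ) p q) := by
      funext p q
      by_cases hp : p ∈ S
      · simp [Finset.piecewise, hp]
      · simp [Finset.piecewise, hp]
    have h4 : Matrix.detRowAlternating (S.piecewise (fun i => z • (fun q => M i q))
        (fun p q => (1 : Matrix (Fin n) (Fin n) ℝ) p q))
        = (Matrix.of (fun p q => (if p ∈ S then z else 1) *
            (Matrix.of (S.piecewise (fun p q => M p q)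
              (fun p q => (1 : Matrix (Fin n) (Fin n) ℝ) p q)) : Matrix (Fin n) (Fin n) ℝ) p q)
            : Matrix (Fin n) (Fin n) ℝ).det := by
      rw [← hPQ]; rfl
    rw [h4, Matrix.det_mul_column, det_piecewise_eq_subdet]
    congr 1
    rw [Finset.prod_ite_mem, Finset.univ_inter, Finset.prod_const]
  calc ((1 : Matrix (Fin n) (Fin n) ℝ) + z • M).det
      = Matrix.detRowAlternating ((fun i => z • (fun q => M i q))
          + fun p q => (1 : Matrix (Fin n) (Fin n) ℝ) p q) := by rw [e1, e2]
    _ = ∑ S : Finset (Fin n), Matrix.detRowAlternating (S.piecewise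
          (fun i => z • (fun q => M i q))
          (fun p q => (1 : Matrix (Fin n) (Fin n) ℝ) p q)) := hexp
    _ = ∑ S : Finset (Fin n), z ^ S.card * subdet M S := Finset.sum_congr rfl fun S _ => hterm S

/-- Unbiasedness for ridge regression: if `S ~ DPP_L((1/λ)XXᵀ)`, i.e.
`Pr{S} = λ^{-|S|} det((XXᵀ)_{S,S}) / det(I + (1/λ)XXᵀ)`, then
`E[X_S† y_S] = (XᵀX + λI)⁻¹ Xᵀ y`.  (On the support of the DPP, `X_S` has full row rank and
its Moore–Penrose pseudoinverse is `X_S† = X_Sᵀ (X_S X_Sᵀ)⁻¹`.) -/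
theorem lEnsemble_ridge_unbiased {n d : ℕ} (X : Matrix (Fin n) (Fin d) ℝ)
    (y : Fin n → ℝ) (lam : ℝ) (hlam : 0 < lam) :
    ∑ S : Finset (Fin n),
      ((lam⁻¹ ^ S.card * subdet (X * Xᵀ) S) /
          ((1 : Matrix (Fin n) (Fin n) ℝ) + lam⁻¹ • (X * Xᵀ)).det) •
        ((rowsOf X S)ᵀ *ᵥ (((rowsOf X S) * (rowsOf X S)ᵀ)⁻¹ *ᵥ
          fun i : {x // x ∈ S} => y i))
      = (Xᵀ * X + lam • (1 : Matrix (Fin d) (Fin d) ℝ))⁻¹ *ᵥ (Xᵀ *ᵥ y) := by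
  have hlam' : lam ≠ 0 := hlam.ne'
  set B : Matrix (Fin n) (Fin n) ℝ := 1 + lam⁻¹ • (X * Xᵀ) with hBdef
  set C : Matrix (Fin d) (Fin d) ℝ := Xᵀ * X + lam • 1 with hCdef
  -- positivity facts
  have hXXt : (X * Xᵀ).PosSemidef := by
    have h := Matrix.posSemidef_self_mul_conjTranspose X
    rwa [Matrix.conjTranspose_eq_transpose_of_trivial] at h
  have hsmulpsd : (lam⁻¹ • (X * Xᵀ)).PosSemidef := by
    have h' : (Real.sqrt lam⁻¹ • X) * (Real.sqrt lam⁻¹ • X)ᵀ = lam⁻¹ • (X * Xᵀ) := by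
      rw [Matrix.transpose_smul, Matrix.smul_mul, Matrix.mul_smul, smul_smul,
        Real.mul_self_sqrt (by positivity)]
    have h := Matrix.posSemidef_self_mul_conjTranspose (Real.sqrt lam⁻¹ • X)
    rw [Matrix.conjTranspose_eq_transpose_of_trivial, h'] at h
    exact h
  have hBpd : B.PosDef := Matrix.PosDef.one.add_posSemidef hsmulpsd
  have hBunit : IsUnit B.det := hBpd.det_pos.ne'.isUnit
  have hBne : B.det ≠ 0 := hBpd.det_pos.ne'
  have hXtX : (Xᵀ * X).PosSemidef := by
    have h := Matrix.posSemidef_conjTranspose_mul_self X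
    rwa [Matrix.conjTranspose_eq_transpose_of_trivial] at h
  have hlam1 : (lam • (1 : Matrix (Fin d) (Fin d) ℝ)) = Matrix.diagonal (fun _ => lam) := by
    ext i j
    by_cases h : i = j <;> simp [Matrix.one_apply, h]
  have hCpd : C.PosDef := by
    rw [hCdef, hlam1]
    exact Matrix.PosDef.posSemidef_add hXtX (Matrix.posDef_diagonal_iff.mpr fun _ => hlam)
  have hCunit : IsUnit C.det := hCpd.det_pos.ne'.isUnit
  -- submatrix of the Gram matrix
  have hsubdet : ∀ S : Finset (Fin n),
      subdet (X * Xᵀ) S = (rowsOf X S * (rowsOf X S)ᵀ).det := by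
    intro S
    rfl
  -- step 1 : replace inverses by adjugates
  have hterm : ∀ S : Finset (Fin n),
      ((lam⁻¹ ^ S.card * subdet (X * Xᵀ) S) / B.det) •
        ((rowsOf X S)ᵀ *ᵥ ((rowsOf X S * (rowsOf X S)ᵀ)⁻¹ *ᵥ fun i : {x // x ∈ S} => y i))
      = (lam⁻¹ ^ S.card / B.det) •
        ((rowsOf X S)ᵀ *ᵥ ((rowsOf X S * (rowsOf X S)ᵀ).adjugate *ᵥ
          fun i : {x // x ∈ S} => y i)) := by
    intro S
    set A : Matrix {x // x ∈ S} {x // x ∈ S} ℝ := rowsOf X S * (rowsOf X S)ᵀ with hAdef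
    by_cases hu : IsUnit A.det
    · have hdet : A.det ≠ 0 := IsUnit.ne_zero hu
      rw [Matrix.inv_def, Ring.inverse_eq_inv', Matrix.smul_mulVec,
        Matrix.mulVec_smul, smul_smul, hsubdet S]
      congr 1
      field_simp
      ring
    · have hdet0 : A.det = 0 := by
        by_contra h
        exact hu (isUnit_iff_ne_zero.mpr h)
      have hAw : A *ᵥ (A.adjugate *ᵥ fun i : {x // x ∈ S} => y i) = 0 := by
        rw [Matrix.mulVec_mulVec, Matrix.mul_adjugate, hdet0, zero_smul, Matrix.zero_mulVec]
      set w : {x // x ∈ S} → ℝ := A.adjugate *ᵥ fun i : {x // x ∈ S} => y i with hwdef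
      set uvec : Fin d → ℝ := (rowsOf X S)ᵀ *ᵥ w with huvecdef
      have hdz : uvec ⬝ᵥ uvec = 0 := by
        calc uvec ⬝ᵥ uvec = uvec ⬝ᵥ ((rowsOf X S)ᵀ *ᵥ w) := rfl
          _ = (uvec ᵥ* (rowsOf X S)ᵀ) ⬝ᵥ w := by rw [Matrix.dotProduct_mulVec]
          _ = (rowsOf X S *ᵥ uvec) ⬝ᵥ w := by rw [Matrix.vecMul_transpose]
          _ = (rowsOf X S *ᵥ ((rowsOf X S)ᵀ *ᵥ w)) ⬝ᵥ w := rfl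
          _ = (A *ᵥ w) ⬝ᵥ w := by rw [Matrix.mulVec_mulVec, ← hAdef]
          _ = 0 := by rw [hwdef, hAw, zero_dotProduct]
      have huz : uvec = 0 := dotProduct_self_eq_zero.mp hdz
      rw [hsubdet S, ← hAdef, hdet0, mul_zero, zero_div, zero_smul]
      rw [huz, smul_zero]
  rw [Finset.sum_congr rfl fun S _ => hterm S]
  -- step 2 : the key vector identity, coordinatewise
  have hkey : ∑ S : Finset (Fin n), (lam⁻¹ ^ S.card / B.det) •
        ((rowsOf X S)ᵀ *ᵥ ((rowsOf X S * (rowsOf X S)ᵀ).adjugate *ᵥ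
          fun i : {x // x ∈ S} => y i))
      = B.det⁻¹ • (Xᵀ *ᵥ (B.adjugate *ᵥ (lam⁻¹ • y))) := by
    funext j
    have hcoord : ∀ S : Finset (Fin n),
        ((rowsOf X S)ᵀ *ᵥ ((rowsOf X S * (rowsOf X S)ᵀ).adjugate *ᵥ
          fun i : {x // x ∈ S} => y i)) j
        = subdet (X * Xᵀ + Matrix.of fun p q => y p * X q j) S - subdet (X * Xᵀ) S := by
      intro S
      have hsub2 : subdet (X * Xᵀ + Matrix.of fun p q => y p * X q j) S
          = (rowsOf X S * (rowsOf X S)ᵀ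
              + Matrix.of fun p q : {x // x ∈ S} => (y p) * (X (q : Fin n) j)).det := by
        rfl
      rw [hsub2, det_add_outer, hsubdet S, add_sub_cancel_left]
      rfl
    have hLj : (∑ S : Finset (Fin n), (lam⁻¹ ^ S.card / B.det) •
        ((rowsOf X S)ᵀ *ᵥ ((rowsOf X S * (rowsOf X S)ᵀ).adjugate *ᵥ
          fun i : {x // x ∈ S} => y i))) j
        = B.det⁻¹ * ∑ S : Finset (Fin n), lam⁻¹ ^ S.card *
            (subdet (X * Xᵀ + Matrix.of fun p q => y p * X q j) S - subdet (X * Xᵀ) S) := by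
      rw [Finset.sum_apply, Finset.mul_sum]
      refine Finset.sum_congr rfl fun S _ => ?_
      rw [Pi.smul_apply, smul_eq_mul, hcoord S]
      ring
    rw [hLj]
    have hsplit : ∑ S : Finset (Fin n), lam⁻¹ ^ S.card *
          (subdet (X * Xᵀ + Matrix.of fun p q => y p * X q j) S - subdet (X * Xᵀ) S)
        = ((1 : Matrix (Fin n) (Fin n) ℝ)
            + lam⁻¹ • (X * Xᵀ + Matrix.of fun p q => y p * X q j)).det - B.det := by
      rw [det_one_add_smul_eq_sum_subdet, hBdef, det_one_add_smul_eq_sum_subdet,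
        ← Finset.sum_sub_distrib]
      exact Finset.sum_congr rfl fun S _ => by ring
    have hBout : ((1 : Matrix (Fin n) (Fin n) ℝ)
          + lam⁻¹ • (X * Xᵀ + Matrix.of fun p q => y p * X q j))
        = B + Matrix.of fun p q => (lam⁻¹ • y) p * X q j := by
      rw [hBdef]
      ext p q
      simp [Matrix.one_apply, mul_add]
      ring
    rw [hsplit, hBout, det_add_outer]
    have hXj : (fun q => X q j) ⬝ᵥ (B.adjugate *ᵥ (lam⁻¹ • y))
        = (Xᵀ *ᵥ (B.adjugate *ᵥ (lam⁻¹ • y))) j := rfl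
    rw [hXj]
    simp only [Pi.smul_apply, smul_eq_mul]
    ring
  rw [hkey]
  -- step 3 : adjugate to inverse, and the push-through identity
  have hadjB : B.adjugate = B.det • B⁻¹ := by
    rw [Matrix.inv_def, Ring.inverse_eq_inv', smul_smul, mul_inv_cancel₀ hBne, one_smul]
  rw [hadjB]
  have hstep : B.det⁻¹ • (Xᵀ *ᵥ ((B.det • B⁻¹) *ᵥ (lam⁻¹ • y)))
      = lam⁻¹ • (Xᵀ *ᵥ (B⁻¹ *ᵥ y)) := by
    rw [Matrix.smul_mulVec, Matrix.mulVec_smul, smul_smul, inv_mul_cancel₀ hBne,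
      one_smul, Matrix.mulVec_smul, Matrix.mulVec_smul]
  rw [hstep]
  -- the push-through identity
  have hM : C * (lam⁻¹ • Xᵀ) = Xᵀ * B := by
    rw [hCdef, hBdef, Matrix.mul_smul, Matrix.add_mul, Matrix.mul_add, Matrix.mul_one,
      Matrix.mul_smul, Matrix.smul_mul, smul_add, smul_smul, Matrix.mul_assoc]
    rw [Matrix.one_mul, inv_mul_cancel₀ hlam', one_smul, add_comm]
  have hCinv : C⁻¹ * C = 1 := Matrix.nonsing_inv_mul C hCunit
  have hCC : C * C⁻¹ = 1 := Matrix.mul_nonsing_inv C hCunit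
  have hBB : B * B⁻¹ = 1 := Matrix.mul_nonsing_inv B hBunit
  have hinner : C *ᵥ (C⁻¹ *ᵥ (Xᵀ *ᵥ y)) = Xᵀ *ᵥ y := by
    rw [Matrix.mulVec_mulVec, hCC, Matrix.one_mulVec]
  have happly : C *ᵥ (lam⁻¹ • (Xᵀ *ᵥ (B⁻¹ *ᵥ y))) = C *ᵥ (C⁻¹ *ᵥ (Xᵀ *ᵥ y)) := by
    calc C *ᵥ (lam⁻¹ • (Xᵀ *ᵥ (B⁻¹ *ᵥ y)))
        = lam⁻¹ • (C *ᵥ (Xᵀ *ᵥ (B⁻¹ *ᵥ y))) := by rw [Matrix.mulVec_smul]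
      _ = lam⁻¹ • ((C * Xᵀ) *ᵥ (B⁻¹ *ᵥ y)) := by rw [Matrix.mulVec_mulVec]
      _ = (lam⁻¹ • (C * Xᵀ)) *ᵥ (B⁻¹ *ᵥ y) := by rw [Matrix.smul_mulVec]
      _ = (Xᵀ * B) *ᵥ (B⁻¹ *ᵥ y) := by rw [← Matrix.mul_smul, hM]
      _ = Xᵀ *ᵥ y := by rw [Matrix.mulVec_mulVec, Matrix.mul_assoc, hBB, Matrix.mul_one]
      _ = C *ᵥ (C⁻¹ *ᵥ (Xᵀ *ᵥ y)) := hinner.symm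
  calc lam⁻¹ • (Xᵀ *ᵥ (B⁻¹ *ᵥ y))
      = (C⁻¹ * C) *ᵥ (lam⁻¹ • (Xᵀ *ᵥ (B⁻¹ *ᵥ y))) := by rw [hCinv, Matrix.one_mulVec]
    _ = C⁻¹ *ᵥ (C *ᵥ (lam⁻¹ • (Xᵀ *ᵥ (B⁻¹ *ᵥ y)))) := by rw [← Matrix.mulVec_mulVec]
    _ = C⁻¹ *ᵥ (C *ᵥ (C⁻¹ *ᵥ (Xᵀ *ᵥ y))) := by rw [happly]
    _ = C⁻¹ *ᵥ (Xᵀ *ᵥ y) := by rw [hinner]
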